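/- Let r ∈ (2,∞) and let S : M^d_sym → M^d_sym satisfy the assumptions (h1) and (h2). Then there exists a constant c3 > 0 (depending only on c0 and r) such that for all B, D ∈ M^d_sym one has the strict monotonicity estimate (S(B) − S(D)) : (B − D) ≥ c3 |B − D|² (1 + |B| + |D|)^{r−2}. -/

import Mathlib

open MeasureTheory Real

noncomputable section

/-- Partial derivative in direction `i` of a scalar function on `ℝ^d`. -/
def pd {d : ℕ} (f : (Fin d → ℝ) → ℝ) (i : Fin d) (x : Fin d → ℝ) : ℝ :=
  fderiv ℝ f x (Pi.single i 1)

/-- The periodic box `Ω = (0, 2π)^d`. -/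
def box (d : ℕ) : Set (Fin d → ℝ) := Set.univ.pi fun _ => Set.Ioo 0 (2 * π)

/-- `2π`-periodicity in every coordinate direction. -/
def IsPer {d : ℕ} {E : Type*} (g : (Fin d → ℝ) → E) : Prop :=
  ∀ (x : Fin d → ℝ) (i : Fin d), g (x + Pi.single i (2 * π)) = g x

/-- Frobenius norm of a `d × d` matrix. -/
def frob {d : ℕ} (M : Fin d → Fin d → ℝ) : ℝ := Real.sqrt (∑ i, ∑ j, M i j ^ 2)

/-- Inner (double-dot) product of `d × d` matrices: `A : B = ∑ᵢⱼ Aᵢⱼ Bᵢⱼ`. -/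
def minner {d : ℕ} (A B : Fin d → Fin d → ℝ) : ℝ := ∑ i, ∑ j, A i j * B i j

/-- Symmetry of a `d × d` matrix. -/
def Symm {d : ℕ} (A : Fin d → Fin d → ℝ) : Prop := ∀ i j, A i j = A j i

/-- The gradient matrix `(∇u)ᵢⱼ = ∂ⱼuᵢ` of a vector field. -/
def gradM {d : ℕ} (u : (Fin d → ℝ) → (Fin d → ℝ)) (x : Fin d → ℝ) : Fin d → Fin d → ℝ :=
  fun i j => pd (fun y => u y i) j x

/-- The symmetric part `Du = ½(∇u + (∇u)ᵀ)` of the gradient. -/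
def symG {d : ℕ} (u : (Fin d → ℝ) → (Fin d → ℝ)) (x : Fin d → ℝ) : Fin d → Fin d → ℝ :=
  fun i j => (gradM u x i j + gradM u x j i) / 2

/-- Componentwise Laplacian `Δuᵢ = ∑ₖ ∂ₖ∂ₖ uᵢ`. -/
def lap {d : ℕ} (u : (Fin d → ℝ) → (Fin d → ℝ)) (i : Fin d) (x : Fin d → ℝ) : ℝ :=
  ∑ k, pd (pd (fun y => u y i) k) k x

/-- Divergence-free condition `div u = ∑ᵢ ∂ᵢuᵢ = 0` everywhere. -/
def DivFree {d : ℕ} (u : (Fin d → ℝ) → (Fin d → ℝ)) : Prop :=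
  ∀ x, ∑ i, pd (fun y => u y i) i x = 0

namespace Stmt6Aux

variable {d : ℕ}

def toE (M : Fin d → Fin d → ℝ) : EuclideanSpace ℝ (Fin d × Fin d) :=
  WithLp.toLp 2 (fun p : Fin d × Fin d => M p.1 p.2)

lemma frob_eq_norm (M : Fin d → Fin d → ℝ) : frob M = ‖toE M‖ := by
  rw [EuclideanSpace.norm_eq, frob]
  congr 1
  rw [Fintype.sum_prod_type]
  simp [toE, Real.norm_eq_abs, sq_abs]

lemma toE_add (M N : Fin d → Fin d → ℝ) : toE (M + N) = toE M + toE N := rfl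
lemma toE_smul (t : ℝ) (M : Fin d → Fin d → ℝ) : toE (t • M) = t • toE M := rfl

lemma frob_nonneg (M : Fin d → Fin d → ℝ) : 0 ≤ frob M := Real.sqrt_nonneg _

lemma frob_neg (M : Fin d → Fin d → ℝ) : frob (-M) = frob M := by
  simp [frob]

lemma minner_self (M : Fin d → Fin d → ℝ) : minner M M = frob M ^ 2 := by
  rw [frob, Real.sq_sqrt (by positivity)]
  simp [minner, sq]

lemma minner_neg_neg (A B : Fin d → Fin d → ℝ) : minner (-A) (-B) = minner A B := by
  simp [minner]

lemma minner_sub_left (X Y A : Fin d → Fin d → ℝ) :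
    minner (X - Y) A = minner X A - minner Y A := by
  simp [minner, sub_mul, Finset.sum_sub_distrib]

lemma frob_lower (B D : Fin d → Fin d → ℝ) (t : ℝ) (ht0 : 0 ≤ t) (ht1 : t ≤ 1) :
    t * frob B - (1 - t) * frob D ≤ frob (D + t • (B - D)) := by
  have h : D + t • (B - D) = t • B + (1 - t) • D := by
    funext i j
    simp [Pi.smul_apply, smul_eq_mul]
    ring
  rw [h, frob_eq_norm, frob_eq_norm, frob_eq_norm, toE_add, toE_smul, toE_smul]
  have := norm_sub_norm_le (t • toE B) (-((1 - t) • toE D))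
  rw [sub_neg_eq_add, norm_neg, norm_smul, norm_smul] at this
  simpa [Real.norm_eq_abs, abs_of_nonneg ht0, abs_of_nonneg (by linarith : (0:ℝ) ≤ 1 - t)]
    using this

lemma hasDerivAt_phi (S : (Fin d → Fin d → ℝ) → (Fin d → Fin d → ℝ))
    (hS : ContDiff ℝ 1 S) (D A : Fin d → Fin d → ℝ) (t : ℝ) :
    HasDerivAt (fun s : ℝ => minner (S (D + s • A)) A)
      (minner (fderiv ℝ S (D + t • A) A) A) t := by
  have hγ : HasDerivAt (fun s : ℝ => D + s • A) A t := by
    simpa using ((hasDerivAt_id t).smul_const A).const_add D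
  have hSd : HasFDerivAt S (fderiv ℝ S (D + t • A)) (D + t • A) :=
    (hS.differentiable one_ne_zero (D + t • A)).hasFDerivAt
  have hcomp : HasDerivAt (fun s => S (D + s • A)) (fderiv ℝ S (D + t • A) A) t :=
    hSd.comp_hasDerivAt t hγ
  have hij : ∀ i j, HasDerivAt (fun s => S (D + s • A) i j)
      ((fderiv ℝ S (D + t • A) A) i j) t := fun i j =>
    hasDerivAt_pi.1 (hasDerivAt_pi.1 hcomp i) j
  have hsum : HasDerivAt (fun s => ∑ i, ∑ j, S (D + s • A) i j * A i j)
      (∑ i, ∑ j, (fderiv ℝ S (D + t • A) A) i j * A i j) t := by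
    apply HasDerivAt.fun_sum; intro i _
    apply HasDerivAt.fun_sum; intro j _
    exact (hij i j).mul_const _
  simpa [minner] using hsum

lemma key (r : ℝ) (hr : 2 < r)
    (S : (Fin d → Fin d → ℝ) → (Fin d → Fin d → ℝ))
    (hS : ContDiff ℝ 1 S)
    (c0 : ℝ) (hc0 : 0 < c0)
    (h1 : ∀ B D, Symm B → Symm D →
      c0 * (1 + frob D) ^ (r - 2) * frob B ^ 2 ≤ minner (fderiv ℝ S D B) B)
    (B D : Fin d → Fin d → ℝ) (hB : Symm B) (hD : Symm D) (hBD : frob D ≤ frob B) :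
    minner (S B - S D) (B - D) ≥
      c0 / 4 ^ (r - 1) * frob (B - D) ^ 2 * (1 + frob B + frob D) ^ (r - 2) := by
  set A := B - D with hA
  set φ : ℝ → ℝ := fun s => minner (S (D + s • A)) A with hφ
  have hSymA : Symm A := fun i j => by
    simp only [hA, Pi.sub_apply, hB i j, hD i j]
  have hSymG : ∀ t : ℝ, Symm (D + t • A) := fun t i j => by
    simp only [Pi.add_apply, Pi.smul_apply, smul_eq_mul, hA, Pi.sub_apply,
      hB i j, hD i j]
  have hderiv : ∀ t : ℝ, HasDerivAt φ (minner (fderiv ℝ S (D + t • A) A) A) t :=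
    hasDerivAt_phi S hS D A
  have hdiff : Differentiable ℝ φ := fun t => (hderiv t).differentiableAt
  have hderiv' : ∀ t : ℝ, deriv φ t = minner (fderiv ℝ S (D + t • A) A) A :=
    fun t => (hderiv t).deriv
  have hnonneg : ∀ t : ℝ, 0 ≤ deriv φ t := by
    intro t
    rw [hderiv' t]
    refine le_trans ?_ (h1 A (D + t • A) hSymA (hSymG t))
    have : (0:ℝ) ≤ (1 + frob (D + t • A)) ^ (r - 2) :=
      Real.rpow_nonneg (by linarith [frob_nonneg (D + t • A)]) _
    positivity
  set s := 1 + frob B + frob D with hs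
  have hs4 : 0 < s / 4 := by
    have := frob_nonneg B; have := frob_nonneg D
    rw [hs]; positivity
  set K : ℝ := c0 * (s / 4) ^ (r - 2) * frob A ^ 2 with hK
  have hKle : ∀ t ∈ interior (Set.Icc (3/4 : ℝ) 1), K ≤ deriv φ t := by
    intro t ht
    rw [interior_Icc] at ht
    obtain ⟨ht0, ht1⟩ := ht
    have hfl : s / 4 ≤ 1 + frob (D + t • A) := by
      have h2 := frob_lower B D t (by linarith) (le_of_lt ht1)
      have : frob B / 2 ≤ frob (D + t • A) := by
        nlinarith [frob_nonneg B, frob_nonneg D]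
      rw [hs]; nlinarith [frob_nonneg B, frob_nonneg D]
    have hpow : (s / 4) ^ (r - 2) ≤ (1 + frob (D + t • A)) ^ (r - 2) :=
      Real.rpow_le_rpow (le_of_lt hs4) hfl (by linarith)
    rw [hderiv' t]
    refine le_trans ?_ (h1 A (D + t • A) hSymA (hSymG t))
    have hA2 : (0:ℝ) ≤ frob A ^ 2 := sq_nonneg _
    rw [hK]
    exact mul_le_mul_of_nonneg_right
      (mul_le_mul_of_nonneg_left hpow (le_of_lt hc0)) hA2
  have step1 : K * (1 - 3/4) ≤ φ 1 - φ (3/4) := by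
    have := (convex_Icc (3/4 : ℝ) 1).mul_sub_le_image_sub_of_le_deriv
      hdiff.continuous.continuousOn (hdiff.differentiableOn) hKle
      (3/4) (Set.mem_Icc.2 ⟨by norm_num, by norm_num⟩) 1
      (Set.mem_Icc.2 ⟨by norm_num, by norm_num⟩) (by norm_num)
    linarith
  have step2 : (0:ℝ) ≤ φ (3/4) - φ 0 := by
    have := mul_sub_le_image_sub_of_le_deriv hdiff hnonneg
      (by norm_num : (0:ℝ) ≤ 3/4)
    linarith
  have hφ1 : φ 1 = minner (S B) A := by
    have : D + (1:ℝ) • A = B := by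
      funext i j
      simp [hA]
    rw [hφ]; simp only; rw [this]
  have hφ0 : φ 0 = minner (S D) A := by
    have : D + (0:ℝ) • A = D := by simp
    rw [hφ]; simp only; rw [this]
  have hmain : K / 4 ≤ minner (S B - S D) A := by
    rw [minner_sub_left, ← hφ1, ← hφ0]
    linarith
  -- identify constants
  have h4 : (4:ℝ) ^ (r - 1) = 4 ^ (r - 2) * 4 := by
    rw [show r - 1 = (r - 2) + 1 by ring, Real.rpow_add (by norm_num), Real.rpow_one]
  have hsnn : (0:ℝ) ≤ s := by linarith
  have hdiv : (s / 4) ^ (r - 2) = s ^ (r - 2) / 4 ^ (r - 2) :=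
    Real.div_rpow hsnn (by norm_num : (0:ℝ) ≤ 4) (r - 2)
  have h4pos : (0:ℝ) < 4 ^ (r - 2) := Real.rpow_pos_of_pos (by norm_num) _
  have : c0 / 4 ^ (r - 1) * frob A ^ 2 * s ^ (r - 2) = K / 4 := by
    rw [hK, hdiv, h4]
    field_simp
  rw [ge_iff_le, this]
  exact hmain

end Stmt6Aux

/-- strict monotonicity of the stress tensor. -/
theorem stmt_6 (d : ℕ) (r : ℝ) (hr : 2 < r)
    (S : (Fin d → Fin d → ℝ) → (Fin d → Fin d → ℝ))
    (hS : ContDiff ℝ 1 S) (hS0 : S 0 = 0)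
    (hSsym : ∀ D, Symm D → Symm (S D))
    (c0 c1 c2 : ℝ) (hc0 : 0 < c0) (hc1 : 0 < c1) (hc2 : 0 < c2)
    (h1 : ∀ B D, Symm B → Symm D →
      c0 * (1 + frob D) ^ (r - 2) * frob B ^ 2 ≤ minner (fderiv ℝ S D B) B ∧
      minner (fderiv ℝ S D B) B ≤ c1 * (1 + frob D) ^ (r - 2) * frob B ^ 2)
    (h2 : ∀ B D, Symm B → Symm D →
      frob (fderiv ℝ S D B) ≤ c2 * (1 + frob D) ^ (r - 2) * frob B) :
    ∃ c3 > 0, ∀ B D, Symm B → Symm D →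
      minner (S B - S D) (B - D) ≥
        c3 * frob (B - D) ^ 2 * (1 + frob B + frob D) ^ (r - 2) := by
  refine ⟨c0 / 4 ^ (r - 1), by positivity, ?_⟩
  have h1' : ∀ B D, Symm B → Symm D →
      c0 * (1 + frob D) ^ (r - 2) * frob B ^ 2 ≤ minner (fderiv ℝ S D B) B :=
    fun B D hB hD => (h1 B D hB hD).1
  intro B D hB hD
  rcases le_total (frob D) (frob B) with h | h
  · exact Stmt6Aux.key r hr S hS c0 hc0 h1' B D hB hD h
  · have := Stmt6Aux.key r hr S hS c0 hc0 h1' D B hD hB h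
    have e1 : minner (S D - S B) (D - B) = minner (S B - S D) (B - D) := by
      rw [show S D - S B = -(S B - S D) by abel, show D - B = -(B - D) by abel,
        Stmt6Aux.minner_neg_neg]
    have e2 : frob (D - B) = frob (B - D) := by
      rw [show D - B = -(B - D) by abel, Stmt6Aux.frob_neg]
    have e3 : 1 + frob D + frob B = 1 + frob B + frob D := by ring
    rw [e1, e2, e3] at this
    exact this
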